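/- (Relative entropy decomposition bound.) Let σ and ρ be d×d density matrices that are both positive definite. Then the quantum relative entropy satisfies S(σ‖ρ) ≤ |S(σ) - S(ρ)| + ‖ρ - σ‖·‖ln ρ‖, where the norms are Frobenius norms. -/

import Mathlib

open Matrix
open scoped ComplexOrder

/-- The Frobenius (Hilbert–Schmidt) norm of a complex matrix. -/
noncomputable def frobNorm {d : ℕ} (M : Matrix (Fin d) (Fin d) ℂ) : ℝ :=
  Real.sqrt ((Mᴴ * M).trace.re)

/-- The von Neumann entropy of a Hermitian matrix: `S(ρ) = ∑ₖ -λₖ ln λₖ` where the `λₖ`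
are the real eigenvalues (counted with multiplicity), with the convention `0 ln 0 = 0`.
For non-Hermitian matrices the value is defined to be `0`. -/
noncomputable def vnEntropy {d : ℕ} (ρ : Matrix (Fin d) (Fin d) ℂ) : ℝ :=
  if h : ρ.IsHermitian then ∑ k, Real.negMulLog (h.eigenvalues k) else 0

/-- The matrix logarithm obtained via the continuous functional calculus. -/
noncomputable def matLog {d : ℕ} (ρ : Matrix (Fin d) (Fin d) ℂ) : Matrix (Fin d) (Fin d) ℂ :=
  cfc Real.log ρ

/-- The quantum relative entropy `S(σ‖ρ) = Re tr (σ ln σ - σ ln ρ)`. -/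
noncomputable def relEntropy {d : ℕ} (σ ρ : Matrix (Fin d) (Fin d) ℂ) : ℝ :=
  ((σ * matLog σ - σ * matLog ρ).trace).re

lemma trace_cfc_mul_cfc {d : ℕ} {A : Matrix (Fin d) (Fin d) ℂ} (hA : A.IsHermitian)
    (f g : ℝ → ℝ) :
    (hA.cfc f * hA.cfc g).trace = ∑ k, ((f (hA.eigenvalues k) * g (hA.eigenvalues k) : ℝ) : ℂ) := by
  set U : Matrix (Fin d) (Fin d) ℂ := (hA.eigenvectorUnitary : Matrix (Fin d) (Fin d) ℂ)
  have hU : star U * U = 1 := Unitary.star_mul_self_of_mem hA.eigenvectorUnitary.2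
  unfold Matrix.IsHermitian.cfc
  simp only [Unitary.conjStarAlgAut_apply]
  rw [show (U * diagonal (RCLike.ofReal ∘ f ∘ hA.eigenvalues) * star U) *
      (U * diagonal (RCLike.ofReal ∘ g ∘ hA.eigenvalues) * star U)
      = U * (diagonal (RCLike.ofReal ∘ f ∘ hA.eigenvalues) * ((star U * U) *
        diagonal (RCLike.ofReal ∘ g ∘ hA.eigenvalues))) * star U by
    simp only [mul_assoc], hU, one_mul, trace_mul_cycle, ← mul_assoc, hU, one_mul,
    diagonal_mul_diagonal, trace_diagonal]
  simp [Complex.ofReal_mul]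

lemma cfc_id_eq {d : ℕ} {A : Matrix (Fin d) (Fin d) ℂ} (hA : A.IsHermitian) :
    hA.cfc id = A := by
  conv_rhs => rw [hA.spectral_theorem]
  rfl

lemma frobNorm_eq {d : ℕ} (M : Matrix (Fin d) (Fin d) ℂ) :
    frobNorm M = Real.sqrt (∑ p : Fin d × Fin d, ‖M p.1 p.2‖ ^ 2) := by
  unfold frobNorm
  congr 1
  rw [Matrix.trace, Fintype.sum_prod_type]
  simp only [Matrix.diag, Matrix.mul_apply, Matrix.conjTranspose_apply, Complex.re_sum]
  rw [Finset.sum_comm]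
  refine Finset.sum_congr rfl fun i _ => Finset.sum_congr rfl fun j _ => ?_
  rw [show star (M i j) = (starRingEnd ℂ) (M i j) from rfl, ← Complex.normSq_eq_conj_mul_self]
  simp [Complex.normSq_eq_norm_sq, ← Complex.ofReal_pow]

lemma re_trace_le {d : ℕ} (A B : Matrix (Fin d) (Fin d) ℂ) :
    ((Aᴴ * B).trace).re ≤ frobNorm A * frobNorm B := by
  have h1 : ((Aᴴ * B).trace).re ≤ ∑ p : Fin d × Fin d, ‖A p.1 p.2‖ * ‖B p.1 p.2‖ := by
    rw [Matrix.trace, Fintype.sum_prod_type]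
    simp only [Matrix.diag, Matrix.mul_apply, Matrix.conjTranspose_apply, Complex.re_sum]
    rw [Finset.sum_comm]
    refine Finset.sum_le_sum fun i _ => Finset.sum_le_sum fun j _ => ?_
    calc ((starRingEnd ℂ) (A i j) * B i j).re ≤ ‖(starRingEnd ℂ) (A i j) * B i j‖ :=
          Complex.re_le_norm _
      _ = ‖A i j‖ * ‖B i j‖ := by rw [norm_mul, RCLike.norm_conj]
  refine h1.trans ?_
  rw [frobNorm_eq, frobNorm_eq, ← Real.sqrt_mul (by positivity)]
  rw [Real.le_sqrt (by positivity) (by positivity)]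
  exact Finset.sum_mul_sq_le_sq_mul_sq _ _ _

lemma re_trace_self_log {d : ℕ} {A : Matrix (Fin d) (Fin d) ℂ} (hA : A.IsHermitian) :
    ((A * matLog A).trace).re = -vnEntropy A := by
  have h : A * matLog A = hA.cfc id * hA.cfc Real.log := by
    rw [matLog, hA.cfc_eq, cfc_id_eq hA]
  rw [h, trace_cfc_mul_cfc, Complex.re_sum]
  rw [vnEntropy, dif_pos hA, ← Finset.sum_neg_distrib]
  refine Finset.sum_congr rfl fun k _ => ?_
  simp [Real.negMulLog]

theorem stmt_8 (d : ℕ) (σ ρ : Matrix (Fin d) (Fin d) ℂ)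
    (hσ : σ.PosDef) (hσtr : σ.trace = 1)
    (hρ : ρ.PosDef) (hρtr : ρ.trace = 1) :
    relEntropy σ ρ ≤ |vnEntropy σ - vnEntropy ρ| + frobNorm (ρ - σ) * frobNorm (matLog ρ) := by
  have hσH := hσ.1
  have hρH := hρ.1
  have hdiff : (ρ - σ).IsHermitian := hρH.sub hσH
  have hsplit : σ * matLog ρ = ρ * matLog ρ - (ρ - σ) * matLog ρ := by
    rw [sub_mul]; abel
  have hrel : relEntropy σ ρ = vnEntropy ρ - vnEntropy σ + (((ρ - σ) * matLog ρ).trace).re := by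
    rw [relEntropy, hsplit]
    rw [trace_sub, trace_sub, Complex.sub_re, Complex.sub_re]
    rw [re_trace_self_log hσH, re_trace_self_log hρH]
    ring
  rw [hrel]
  have h1 : vnEntropy ρ - vnEntropy σ ≤ |vnEntropy σ - vnEntropy ρ| := by
    rw [abs_sub_comm]; exact le_abs_self _
  have h2 : (((ρ - σ) * matLog ρ).trace).re ≤ frobNorm (ρ - σ) * frobNorm (matLog ρ) := by
    have : (ρ - σ) * matLog ρ = (ρ - σ)ᴴ * matLog ρ := by rw [hdiff.eq]
    rw [this]
    exact re_trace_le _ _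
  linarith
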